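/- arXiv:1406.3745 — 8 statements merged into one kernel-verified Lean document; each statement's English description precedes it below -/
import Mathlib

section
/- Let b_1, …, b_m be pairwise coprime integers ≥ 2 and let b' ∈ ℕ be not divisible by any of b_1, …, b_m. Then there exists a set A ⊂ ℕ with |A| = b' such that A is {b_1,…,b_m}-admissible (i.e. for each j, A mod b_j omits at least one residue class) but A is not {b'}-admissible (i.e. A mod b' covers all residue classes mod b'). -/
theorem stmt1 (m : ℕ) (b : Fin m → ℕ) (hb : ∀ j, 2 ≤ b j)
    (hcop : ∀ i j, i ≠ j → Nat.Coprime (b i) (b j))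
    (b' : ℕ) (hb'pos : 1 ≤ b') (hb' : ∀ j, ¬ b j ∣ b') :
    ∃ A : Finset ℕ, A.card = b' ∧
      (∀ j, ∃ z : ZMod (b j), ∀ a ∈ A, (a : ZMod (b j)) ≠ z) ∧
      (∀ z : ZMod b', ∃ a ∈ A, (a : ZMod b') = z) := by
  haveI : NeZero b' := ⟨by omega⟩
  -- residue targets mod b j for element k
  set c : ℕ → Fin m → ℕ := fun k j => if (k : ZMod (b j)) ≠ 0 then 0 else 1 with hc
  have hbne : ∀ j ∈ (Finset.univ : Finset (Fin m)), b j ≠ 0 := fun j _ => by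
    have := hb j; omega
  have hpp : Set.Pairwise (Finset.univ : Finset (Fin m)) (Function.onFun Nat.Coprime b) :=
    fun i _ j _ hij => hcop i j hij
  set y : ℕ → ℕ := fun k =>
    (Nat.chineseRemainderOfFinset (c k) b Finset.univ hbne hpp : ℕ) with hy
  have hy' : ∀ k j, (y k : ZMod (b j)) = (c k j : ZMod (b j)) := by
    intro k j
    have := (Nat.chineseRemainderOfFinset (c k) b Finset.univ hbne hpp).2 j
      (Finset.mem_univ j)
    exact (ZMod.natCast_eq_natCast_iff _ _ _).mpr this
  set x : ℕ → ℕ := fun k => k + b' * y k with hx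
  have hxb' : ∀ k, (x k : ZMod b') = (k : ZMod b') := by
    intro k; simp [hx]
  refine ⟨(Finset.range b').image x, ?_, ?_, ?_⟩
  · rw [Finset.card_image_of_injOn, Finset.card_range]
    intro k1 hk1 k2 hk2 hkk
    simp only [Finset.mem_coe, Finset.mem_range] at hk1 hk2
    have : (k1 : ZMod b') = (k2 : ZMod b') := by
      rw [← hxb' k1, hkk, hxb']
    have := (ZMod.natCast_eq_natCast_iff _ _ _).mp this
    unfold Nat.ModEq at this
    rwa [Nat.mod_eq_of_lt hk1, Nat.mod_eq_of_lt hk2] at this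
  · intro j
    refine ⟨0, ?_⟩
    intro a ha
    simp only [Finset.mem_image, Finset.mem_range] at ha
    obtain ⟨k, hk, rfl⟩ := ha
    have hxkj : ((x k : ℕ) : ZMod (b j)) = (k : ZMod (b j)) + (b' : ZMod (b j)) * (c k j : ZMod (b j)) := by
      simp [hx, hy']
    rw [hxkj]
    by_cases h : (k : ZMod (b j)) ≠ 0
    · simp only [hc, h, if_pos, ite_not]
      simpa using h
    · push_neg at h
      have hc1 : c k j = 1 := by simp [hc, h]
      rw [hc1, h]
      simp only [Nat.cast_one, mul_one, zero_add]
      intro hz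
      exact hb' j ((ZMod.natCast_eq_zero_iff _ _).mp hz)
  · intro z
    refine ⟨x z.val, ?_, ?_⟩
    · simp only [Finset.mem_image, Finset.mem_range]
      exact ⟨z.val, ZMod.val_lt z, rfl⟩
    · rw [hxb', ZMod.natCast_val, ZMod.cast_id]
end

section
/- Let 𝔅 = {b_k : k ≥ 1} and 𝔅' = {b'_k : k ≥ 1} each be sets of pairwise coprime integers ≥ 2 with ∑ 1/b_k < ∞ and ∑ 1/b'_k < ∞. If every finite 𝔅-admissible subset of ℤ is also 𝔅'-admissible, then for every b' ∈ 𝔅' there exists b ∈ 𝔅 such that b divides b'. -/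
private lemma crt2 (M N : ℕ) (h : Nat.Coprime M N) (a b : ℤ) :
    ∃ x : ℤ, x ≡ a [ZMOD (M : ℤ)] ∧ x ≡ b [ZMOD (N : ℤ)] := by
  obtain ⟨u, v, huv⟩ := Nat.isCoprime_iff_coprime.mpr h
  refine ⟨b * u * M + a * v * N, ?_, ?_⟩
  · rw [Int.modEq_iff_dvd]
    exact ⟨(a - b) * u, by linear_combination (-a) * huv⟩
  · rw [Int.modEq_iff_dvd]
    exact ⟨(b - a) * v, by linear_combination (-b) * huv⟩

private lemma crt_fin {ι : Type} [DecidableEq ι] (s : Finset ι) (m : ι → ℕ) (a : ι → ℤ)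
    (h : (s : Set ι).Pairwise (Function.onFun Nat.Coprime m)) :
    ∃ x : ℤ, ∀ i ∈ s, x ≡ a i [ZMOD (m i : ℤ)] := by
  induction s using Finset.induction_on with
  | empty => exact ⟨0, by simp⟩
  | @insert i s hi ih =>
    obtain ⟨x, hx⟩ := ih (h.mono (by simp [Set.subset_insert]))
    have hco : Nat.Coprime (∏ j ∈ s, m j) (m i) :=
      Nat.Coprime.prod_left fun j hj =>
        h (by simp [hj]) (by simp) (fun hji => hi (hji ▸ hj))
    obtain ⟨y, hy1, hy2⟩ := crt2 _ _ hco x (a i)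
    refine ⟨y, fun j hj => ?_⟩
    rcases Finset.mem_insert.mp hj with rfl | hj
    · exact hy2
    · exact ((hy1.of_dvd (Int.natCast_dvd_natCast.mpr (Finset.dvd_prod_of_mem m hj))).trans (hx j hj))


/-- A finite set `A ⊆ ℤ` is `𝔅`-admissible (for `𝔅 = {B k : k ∈ ℕ}`) if for every `k`
its reduction modulo `B k` omits at least one residue class. -/
def BAdmissible (B : ℕ → ℕ) (A : Finset ℤ) : Prop :=
  ∀ k, ∃ z : ZMod (B k), ∀ a ∈ A, (a : ZMod (B k)) ≠ z

theorem stmt2 (B B' : ℕ → ℕ)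
    (hB : ∀ k, 2 ≤ B k) (hB' : ∀ k, 2 ≤ B' k)
    (hcop : ∀ i j, i ≠ j → Nat.Coprime (B i) (B j))
    (hcop' : ∀ i j, i ≠ j → Nat.Coprime (B' i) (B' j))
    (hsum : Summable fun k => (1 : ℝ) / B k)
    (hsum' : Summable fun k => (1 : ℝ) / B' k)
    (h : ∀ A : Finset ℤ, BAdmissible B A → BAdmissible B' A) :
    ∀ k', ∃ k, B k ∣ B' k' := by
  intro k'
  by_contra hcontra
  push_neg at hcontra
  set b' : ℕ := B' k' with hb'def
  have hb'2 : 2 ≤ b' := hB' k'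
  have hb'ne : b' ≠ 0 := by omega
  have hBne : ∀ k, B k ≠ 0 := fun k => by have := hB k; omega
  -- For each k, find a prime p with more p-adic valuation in B k than in b'
  have hex : ∀ k, ∃ p : ℕ, p.Prime ∧ b'.factorization p < (B k).factorization p := by
    intro k
    by_contra h'
    push_neg at h'
    apply hcontra k
    rw [← Nat.factorization_le_iff_dvd (hBne k) hb'ne]
    intro p
    by_cases hp : p.Prime
    · exact h' p hp
    · simp [Nat.factorization_eq_zero_of_not_prime _ hp]
  choose p hp hlt using hex
  set f : ℕ → ℕ := fun k => b'.factorization (p k) with hfdef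
  set e : ℕ → ℕ := fun k => (B k).factorization (p k) with hedef
  set q : ℕ → ℕ := fun k => p k ^ e k with hqdef
  have hqB : ∀ k, q k ∣ B k := fun k => Nat.ordProj_dvd (B k) (p k)
  have hfb : ∀ k, p k ^ f k ∣ b' := fun k => Nat.ordProj_dvd b' (p k)
  have hpB : ∀ k, p k ∣ B k := fun k =>
    Nat.dvd_of_factorization_pos (by have := hlt k; omega)
  have hpne : ∀ i j, i ≠ j → p i ≠ p j := by
    intro i j hij hpe
    have h1 : p i ∣ Nat.gcd (B i) (B j) := Nat.dvd_gcd (hpB i) (hpe ▸ hpB j)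
    rw [hcop i j hij] at h1
    exact (hp i).one_lt.ne' (Nat.dvd_one.mp h1)
  -- the finite set of relevant indices
  have hinj : Function.Injective B := by
    intro i j hij
    by_contra hne
    have := hcop i j hne
    rw [hij, Nat.Coprime, Nat.gcd_self] at this
    have := hB j; omega
  have hfin : (B ⁻¹' (Set.Iic b')).Finite :=
    (Set.finite_Iic b').preimage hinj.injOn
  set S : Finset ℕ := hfin.toFinset with hSdef
  have hSmem : ∀ k, k ∈ S ↔ B k ≤ b' := fun k => hfin.mem_toFinset
  -- P = product of p k ^ f k over S divides b'
  set P : ℕ := ∏ k ∈ S, p k ^ f k with hPdef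
  have hqcop : ∀ i ∈ S, ∀ j ∈ S, i ≠ j → Nat.Coprime (q i) (q j) := by
    intro i _ j _ hij
    exact Nat.Coprime.coprime_dvd_left (hqB i)
      (Nat.Coprime.coprime_dvd_right (hqB j) (hcop i j hij))
  have hPcop : (S : Set ℕ).Pairwise (Function.onFun Nat.Coprime fun k => p k ^ f k) := by
    intro i _ j _ hij
    exact Nat.Coprime.pow _ _ ((Nat.coprime_primes (hp i) (hp j)).mpr (hpne i j hij))
  have hPb : P ∣ b' := by
    rw [← Int.natCast_dvd_natCast]
    push_cast [hPdef]
    refine Finset.prod_dvd_of_coprime ?_ fun k _ => by exact_mod_cast hfb k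
    intro i hi j hj hij
    have := Nat.isCoprime_iff_coprime.mpr (hPcop hi hj hij)
    simp only [Function.onFun] at this ⊢
    exact_mod_cast this
  set u : ℕ := b' / P with hudef
  have huP : u * P = b' := Nat.div_mul_cancel hPb
  have hucop : ∀ k ∈ S, Nat.Coprime u (p k) := by
    intro k hk
    rcases Nat.coprime_or_dvd_of_prime (hp k) u with hd | hd
    · exact hd.symm
    exfalso
    apply Nat.pow_succ_factorization_not_dvd hb'ne (hp k)
    have hsplit : P = p k ^ f k * ∏ j ∈ S.erase k, p j ^ f j :=
      (Finset.mul_prod_erase S _ hk).symm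
    have : p k ^ (f k + 1) ∣ u * p k ^ f k := by
      rw [pow_succ, mul_comm (p k ^ f k) (p k)]
      exact mul_dvd_mul hd dvd_rfl
    calc p k ^ (b'.factorization (p k) + 1) ∣ u * p k ^ f k := this
      _ ∣ b' := by
          refine Dvd.intro (∏ j ∈ S.erase k, p j ^ f j) ?_
          rw [← huP, hsplit]; ring
  -- Chinese remainder construction
  have key : ∀ r : ℤ, ∃ x : ℤ, x ≡ r [ZMOD (b' : ℤ)] ∧
      ∀ k ∈ S, x ≡ r % (p k ^ f k : ℕ) [ZMOD (q k : ℤ)] := by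
    intro r
    obtain ⟨x0, hx0⟩ := crt_fin S q (fun k => r % (p k ^ f k : ℕ))
      (fun i hi j hj hij => hqcop i hi j hj hij)
    have hQcop : Nat.Coprime u (∏ k ∈ S, q k) :=
      Nat.Coprime.prod_right fun k hk => ((hucop k hk).pow_right _)
    obtain ⟨x, hxu, hxQ⟩ := crt2 u _ hQcop r x0
    have hxq : ∀ k ∈ S, x ≡ r % (p k ^ f k : ℕ) [ZMOD (q k : ℤ)] := by
      intro k hk
      exact ((hxQ.of_dvd (Int.natCast_dvd_natCast.mpr (Finset.dvd_prod_of_mem q hk))).trans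
        (hx0 k hk))
    refine ⟨x, ?_, hxq⟩
    -- x ≡ r mod b'
    rw [Int.modEq_iff_dvd]
    have hdu : (u : ℤ) ∣ r - x := Int.ModEq.dvd hxu
    have hdP : (P : ℤ) ∣ r - x := by
      push_cast [hPdef]
      refine Finset.prod_dvd_of_coprime ?_ fun k hk => ?_
      · intro i hi j hj hij
        have := Nat.isCoprime_iff_coprime.mpr (hPcop hi hj hij)
        simp only [Function.onFun] at this ⊢
        exact_mod_cast this
      · have h1 : x ≡ r % (p k ^ f k : ℕ) [ZMOD ((p k ^ f k : ℕ) : ℤ)] :=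
          (hxq k hk).of_dvd (Int.natCast_dvd_natCast.mpr (pow_dvd_pow (p k) (le_of_lt (hlt k))))
        have h2 : r % ((p k ^ f k : ℕ) : ℤ) ≡ r [ZMOD ((p k ^ f k : ℕ) : ℤ)] :=
          Int.emod_emod_of_dvd r dvd_rfl
        have h3 : ((p k ^ f k : ℕ) : ℤ) ∣ r - x := (h1.trans h2).dvd
        exact_mod_cast h3
    have hco : IsCoprime (u : ℤ) (P : ℤ) := by
      rw [Nat.isCoprime_iff_coprime]
      exact Nat.Coprime.prod_right fun k hk => ((hucop k hk).pow_right _)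
    have := hco.mul_dvd hdu hdP
    rw [← Nat.cast_mul, huP] at this
    exact this
  choose x hx1 hx2 using key
  set A : Finset ℤ := (Finset.range b').image (fun j : ℕ => x (j : ℤ)) with hAdef
  have hadm : BAdmissible B A := by
    intro k
    by_cases hk : B k ≤ b'
    · -- small modulus: use the explicit missing residue q k - 1 mod q k
      have hkS : k ∈ S := (hSmem k).mpr hk
      refine ⟨(((q k : ℤ) - 1 : ℤ) : ZMod (B k)), fun a ha heq => ?_⟩
      obtain ⟨j, hj, rfl⟩ := Finset.mem_image.mp ha
      have hmod : x (j : ℤ) ≡ (q k : ℤ) - 1 [ZMOD ((B k : ℕ) : ℤ)] :=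
        (ZMod.intCast_eq_intCast_iff _ _ _).mp heq
      have hmod2 : x (j : ℤ) ≡ (q k : ℤ) - 1 [ZMOD (q k : ℤ)] :=
        hmod.of_dvd (Int.natCast_dvd_natCast.mpr (hqB k))
      have hc : x (j : ℤ) ≡ (j : ℤ) % ((p k ^ f k : ℕ) : ℤ) [ZMOD (q k : ℤ)] :=
        hx2 (j : ℤ) k hkS
      have hdvd : (q k : ℤ) ∣ ((q k : ℤ) - 1) - (j : ℤ) % ((p k ^ f k : ℕ) : ℤ) :=
        (hc.symm.trans hmod2).dvd
      have hpfpos : (0 : ℤ) < ((p k ^ f k : ℕ) : ℤ) := by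
        have := (hp k).pos
        positivity
      have hc0 : (0 : ℤ) ≤ (j : ℤ) % ((p k ^ f k : ℕ) : ℤ) := Int.emod_nonneg _ (by omega)
      have hc1 : (j : ℤ) % ((p k ^ f k : ℕ) : ℤ) < ((p k ^ f k : ℕ) : ℤ) :=
        Int.emod_lt_of_pos _ hpfpos
      have hltq : ((p k ^ f k : ℕ) : ℤ) < ((q k : ℕ) : ℤ) := by
        have : p k ^ f k < q k := Nat.pow_lt_pow_right (hp k).one_lt (hlt k)
        exact_mod_cast this
      have hlow : (0 : ℤ) < ((q k : ℤ) - 1) - (j : ℤ) % ((p k ^ f k : ℕ) : ℤ) := by omega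
      have := Int.le_of_dvd hlow hdvd
      omega
    · -- large modulus: pigeonhole
      haveI : NeZero (B k) := ⟨hBne k⟩
      set T : Finset (ZMod (B k)) := A.image (fun a : ℤ => (a : ZMod (B k))) with hTdef
      have hTcard : T.card < Fintype.card (ZMod (B k)) := by
        have h1 : T.card ≤ A.card := Finset.card_image_le
        have h2 : A.card ≤ b' := le_trans Finset.card_image_le (by simp)
        rw [ZMod.card]
        omega
      have hex2 : ∃ z : ZMod (B k), z ∉ T := by
        by_contra hz
        push_neg at hz
        have : T = Finset.univ := Finset.eq_univ_iff_forall.mpr hz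
        rw [this, Finset.card_univ] at hTcard
        exact lt_irrefl _ hTcard
      obtain ⟨z, hzT⟩ := hex2
      exact ⟨z, fun a ha heq => hzT (Finset.mem_image.mpr ⟨a, ha, heq⟩)⟩
  obtain ⟨z, hz⟩ := h A hadm k'
  haveI : NeZero b' := ⟨hb'ne⟩
  have hvlt : z.val < b' := ZMod.val_lt z
  apply hz (x ((z.val : ℕ) : ℤ))
    (Finset.mem_image.mpr ⟨z.val, Finset.mem_range.mpr hvlt, rfl⟩)
  have h1 : ((x ((z.val : ℕ) : ℤ) : ℤ) : ZMod b') = (((z.val : ℕ) : ℤ) : ZMod b') :=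
    (ZMod.intCast_eq_intCast_iff _ _ _).mpr (hx1 _)
  rw [h1]
  push_cast
  exact ZMod.natCast_rightInverse z
end

section
/- Let 𝔅 = {b_k : k ≥ 1} and 𝔅' = {b'_k : k ≥ 1} each be sets of pairwise coprime integers ≥ 2 with ∑ 1/b_k < ∞ and ∑ 1/b'_k < ∞. If a finite set A ⊂ ℤ is 𝔅-admissible if and only if it is 𝔅'-admissible (for all finite A), then 𝔅 = 𝔅'. -/
lemma crt2_s3 (m n : ℕ) (a c : ℤ) (h : a ≡ c [ZMOD (Nat.gcd m n)]) :
    ∃ x : ℤ, x ≡ a [ZMOD m] ∧ x ≡ c [ZMOD n] := by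
  obtain ⟨t, ht⟩ := Int.ModEq.dvd h
  have hbez : ((Nat.gcd m n : ℤ)) = m * Int.gcdA m n + n * Int.gcdB m n := by
    simpa using Int.gcd_eq_gcd_ab (m : ℤ) (n : ℤ)
  refine ⟨a + m * Int.gcdA m n * t, Int.modEq_iff_dvd.mpr ⟨-(Int.gcdA m n * t), by ring⟩, ?_⟩
  refine Int.modEq_iff_dvd.mpr ⟨Int.gcdB m n * t, ?_⟩
  have : c - a = (m * Int.gcdA m n + n * Int.gcdB m n) * t := by rw [← hbez]; linarith
  linarith [this]

lemma crt_many (b : ℕ) (B' : ℕ → ℕ)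
    (hcop' : ∀ i j, i ≠ j → Nat.Coprime (B' i) (B' j))
    (S : Finset ℕ) (i : ℤ) (c : ℕ → ℤ)
    (hc : ∀ k ∈ S, c k ≡ i [ZMOD (Nat.gcd (B' k) b)]) :
    ∃ x : ℤ, x ≡ i [ZMOD b] ∧ ∀ k ∈ S, x ≡ c k [ZMOD (B' k)] := by
  induction S using Finset.induction_on with
  | empty => exact ⟨i, Int.ModEq.refl _, by simp⟩
  | @insert k₀ S hk₀ ih =>
    obtain ⟨x, hx1, hx2⟩ := ih (fun k hk => hc k (Finset.mem_insert_of_mem hk))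
    set m : ℕ := b * ∏ k ∈ S, B' k with hm
    have hcopr : Nat.Coprime (B' k₀) (∏ k ∈ S, B' k) :=
      Nat.Coprime.prod_right (fun k hk => hcop' k₀ k (fun he => hk₀ (he ▸ hk)))
    have hgcd : Nat.gcd m (B' k₀) = Nat.gcd b (B' k₀) := by
      rw [hm, Nat.Coprime.gcd_mul_right_cancel _ hcopr.symm]
    have hcompat : x ≡ c k₀ [ZMOD (Nat.gcd m (B' k₀))] := by
      rw [hgcd]
      have h1 : x ≡ i [ZMOD (Nat.gcd b (B' k₀))] :=
        hx1.of_dvd (by exact_mod_cast Nat.gcd_dvd_left b (B' k₀))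
      have h2 : c k₀ ≡ i [ZMOD (Nat.gcd b (B' k₀))] := by
        have := hc k₀ (Finset.mem_insert_self _ _)
        rwa [Nat.gcd_comm] at this
      exact h1.trans h2.symm
    obtain ⟨x', hx'1, hx'2⟩ := crt2_s3 m (B' k₀) x (c k₀) hcompat
    refine ⟨x', ?_, ?_⟩
    · exact (hx'1.of_dvd (by exact_mod_cast dvd_mul_right b _)).trans hx1
    · intro k hk
      rcases Finset.mem_insert.mp hk with rfl | hk
      · exact hx'2
      · have hdvd : (B' k : ℤ) ∣ (m : ℤ) := by
          exact_mod_cast dvd_mul_of_dvd_right (Finset.dvd_prod_of_mem B' hk) b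
        exact (hx'1.of_dvd hdvd).trans (hx2 k hk)

lemma key (B B' : ℕ → ℕ) (hB : ∀ k, 2 ≤ B k) (hB' : ∀ k, 2 ≤ B' k)
    (hcop' : ∀ i j, i ≠ j → Nat.Coprime (B' i) (B' j))
    (h : ∀ A : Finset ℤ, BAdmissible B' A → BAdmissible B A)
    (k₀ : ℕ) (hnd : ∀ k, ¬ B' k ∣ B k₀) : False := by
  set b := B k₀ with hb
  have hb2 : 2 ≤ b := hB k₀
  have hbpos : 0 < b := by omega
  -- injectivity of B'
  have hinj : Function.Injective B' := by
    intro i j hij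
    by_contra hne
    have := hcop' i j hne
    rw [hij] at this
    rw [Nat.coprime_self] at this
    have := hB' j
    omega
  have hfin : {k | B' k ≤ b}.Finite := by
    have : {k | B' k ≤ b} = B' ⁻¹' (Set.Iic b) := rfl
    rw [this]
    exact Set.Finite.preimage hinj.injOn (Set.finite_Iic b)
  set S : Finset ℕ := hfin.toFinset with hS
  -- gcd facts
  have hgcdlt : ∀ k, 0 < Nat.gcd (B' k) b ∧ Nat.gcd (B' k) b < B' k := by
    intro k
    constructor
    · exact Nat.gcd_pos_of_pos_right _ hbpos
    · rcases lt_or_eq_of_le (Nat.le_of_dvd (by have := hB' k; omega) (Nat.gcd_dvd_left (B' k) b)) with hl | he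
      · exact hl
      · exact absurd (he ▸ Nat.gcd_dvd_right (B' k) b) (hnd k)
  -- residues to hit
  set c : ℕ → ℕ → ℤ := fun i k =>
    if ((Nat.gcd (B' k) b : ℤ)) ∣ (i : ℤ) then (Nat.gcd (B' k) b : ℤ) else (i : ℤ) % (Nat.gcd (B' k) b) with hcdef
  have hcmod : ∀ i k, c i k ≡ (i : ℤ) [ZMOD (Nat.gcd (B' k) b)] := by
    intro i k
    rw [hcdef]
    dsimp only
    split_ifs with hd
    · exact (Int.modEq_zero_iff_dvd.mpr dvd_rfl).trans (Int.modEq_zero_iff_dvd.mpr hd).symm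
    · exact (Int.emod_emod_of_dvd _ dvd_rfl : ((i:ℤ) % _ % _ = _))
  have hcbound : ∀ i k, 0 < c i k ∧ c i k < B' k := by
    intro i k
    obtain ⟨hg0, hglt⟩ := hgcdlt k
    rw [hcdef]
    dsimp only
    split_ifs with hd
    · constructor <;> [exact_mod_cast hg0; exact_mod_cast hglt]
    · have hne : (i : ℤ) % (Nat.gcd (B' k) b) ≠ 0 := by
        intro he
        exact hd (Int.dvd_of_emod_eq_zero he)
      have h1 : 0 ≤ (i : ℤ) % (Nat.gcd (B' k) b) := Int.emod_nonneg _ (by exact_mod_cast hg0.ne')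
      have h2 : (i : ℤ) % (Nat.gcd (B' k) b) < Nat.gcd (B' k) b := Int.emod_lt_of_pos _ (by exact_mod_cast hg0)
      constructor
      · omega
      · have : (Nat.gcd (B' k) b : ℤ) < B' k := by exact_mod_cast hglt
        omega
  -- the CRT points
  have hex : ∀ i : ℕ, ∃ x : ℤ, x ≡ (i : ℤ) [ZMOD b] ∧ ∀ k ∈ S, x ≡ c i k [ZMOD (B' k)] :=
    fun i => crt_many b B' hcop' S (i : ℤ) (c i) (fun k _ => hcmod i k)
  choose x hx1 hx2 using hex
  set A : Finset ℤ := (Finset.range b).image x with hA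
  -- A is B'-admissible
  have hadm' : BAdmissible B' A := by
    intro k
    haveI : NeZero (B' k) := ⟨by have := hB' k; omega⟩
    by_cases hk : k ∈ S
    · refine ⟨0, ?_⟩
      intro a ha
      obtain ⟨i, _, rfl⟩ := Finset.mem_image.mp ha
      have heq : ((x i : ZMod (B' k))) = ((c i k : ZMod (B' k))) :=
        (ZMod.intCast_eq_intCast_iff _ _ _).mpr (hx2 i k hk)
      rw [heq]
      intro h0
      have := (ZMod.intCast_zmod_eq_zero_iff_dvd _ _).mp h0
      obtain ⟨h1, h2⟩ := hcbound i k
      have := Int.le_of_dvd h1 this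
      omega
    · -- B' k > b, cardinality argument
      have hgt : b < B' k := by
        by_contra hle
        exact hk (hfin.mem_toFinset.mpr (by push_neg at hle; exact hle))
      set T : Finset (ZMod (B' k)) := A.image (fun a : ℤ => (a : ZMod (B' k))) with hT
      have hcard : T.card < Fintype.card (ZMod (B' k)) := by
        calc T.card ≤ A.card := Finset.card_image_le
          _ ≤ (Finset.range b).card := Finset.card_image_le
          _ = b := Finset.card_range b
          _ < B' k := hgt
          _ = Fintype.card (ZMod (B' k)) := (ZMod.card _).symm
      obtain ⟨z, hz⟩ : ∃ z : ZMod (B' k), z ∉ T := by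
        by_contra hall
        push_neg at hall
        have : Finset.univ ⊆ T := fun z _ => hall z
        have h1 := Finset.card_le_card this
        rw [Finset.card_univ] at h1
        omega
      exact ⟨z, fun a ha he => hz (he ▸ Finset.mem_image_of_mem _ ha)⟩
  -- but A covers all residues mod b : contradiction with BAdmissible B A at k₀
  haveI : NeZero b := ⟨by omega⟩
  obtain ⟨z, hz⟩ := h A hadm' k₀
  have hvlt : z.val < b := ZMod.val_lt z
  have hmem : x z.val ∈ A := Finset.mem_image_of_mem x (Finset.mem_range.mpr hvlt)
  refine hz (x z.val) hmem ?_
  have : ((x z.val : ZMod b)) = ((z.val : ℤ) : ZMod b) :=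
    (ZMod.intCast_eq_intCast_iff _ _ _).mpr (hx1 z.val)
  rw [this]
  push_cast
  simp [ZMod.natCast_val, ZMod.cast_id]


theorem stmt3 (B B' : ℕ → ℕ)
    (hB : ∀ k, 2 ≤ B k) (hB' : ∀ k, 2 ≤ B' k)
    (hcop : ∀ i j, i ≠ j → Nat.Coprime (B i) (B j))
    (hcop' : ∀ i j, i ≠ j → Nat.Coprime (B' i) (B' j))
    (hsum : Summable fun k => (1 : ℝ) / B k)
    (hsum' : Summable fun k => (1 : ℝ) / B' k)
    (h : ∀ A : Finset ℤ, BAdmissible B A ↔ BAdmissible B' A) :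
    Set.range B = Set.range B' := by
  by_contra hne
  have hP : ∃ n, (n ∈ Set.range B ∧ n ∉ Set.range B') ∨ (n ∈ Set.range B' ∧ n ∉ Set.range B) := by
    rw [Set.ext_iff] at hne
    push_neg at hne
    obtain ⟨n, hn⟩ := hne
    exact ⟨n, by tauto⟩
  classical
  set b := Nat.find hP with hbdef
  have hPb := Nat.find_spec hP
  have hmin : ∀ m < b, ¬ ((m ∈ Set.range B ∧ m ∉ Set.range B') ∨ (m ∈ Set.range B' ∧ m ∉ Set.range B)) :=
    fun m hm => Nat.find_min hP hm
  rcases hPb with ⟨⟨k₀, hk₀⟩, hnotin⟩ | ⟨⟨k₀, hk₀⟩, hnotin⟩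
  · refine key B B' hB hB' hcop' (fun A => (h A).mpr) k₀ ?_
    intro k hdvd
    rw [hk₀] at hdvd
    have hle : B' k ≤ b := Nat.le_of_dvd (by have := hB k₀; omega) hdvd
    have hneq : B' k ≠ b := fun he => hnotin ⟨k, he⟩
    have hlt : B' k < b := lt_of_le_of_ne hle hneq
    have := hmin (B' k) hlt
    push_neg at this
    obtain ⟨k₁, hk₁⟩ := this.2 ⟨k, rfl⟩
    -- B k₁ = B' k divides B k₀ = b, with B k₁ < b so k₁ ≠ k₀
    have hne1 : k₁ ≠ k₀ := by
      intro he
      rw [he, hk₀] at hk₁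
      omega
    have hcp := hcop k₁ k₀ hne1
    have hdvd' : B k₁ ∣ B k₀ := by rw [hk₁, hk₀]; exact hdvd
    have hd1 : B k₁ ∣ Nat.gcd (B k₁) (B k₀) := Nat.dvd_gcd dvd_rfl hdvd'
    rw [hcp] at hd1
    have h2 := hB k₁
    have := Nat.le_of_dvd one_pos hd1
    omega
  · refine key B' B hB' hB hcop (fun A => (h A).mp) k₀ ?_
    intro k hdvd
    rw [hk₀] at hdvd
    have hle : B k ≤ b := Nat.le_of_dvd (by have := hB' k₀; omega) hdvd
    have hneq : B k ≠ b := fun he => hnotin ⟨k, he⟩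
    have hlt : B k < b := lt_of_le_of_ne hle hneq
    have := hmin (B k) hlt
    push_neg at this
    obtain ⟨k₁, hk₁⟩ := this.1 ⟨k, rfl⟩
    have hne1 : k₁ ≠ k₀ := by
      intro he
      rw [he, hk₀] at hk₁
      omega
    have hcp := hcop' k₁ k₀ hne1
    have hdvd' : B' k₁ ∣ B' k₀ := by rw [hk₁, hk₀]; exact hdvd
    have hd1 : B' k₁ ∣ Nat.gcd (B' k₁) (B' k₀) := Nat.dvd_gcd dvd_rfl hdvd'
    rw [hcp] at hd1
    have h2 := hB' k₁
    have := Nat.le_of_dvd one_pos hd1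
    omega
end

section
/- Let b_1, …, b_K be pairwise coprime integers ≥ 2, let s_k be integers with 1 ≤ s_k ≤ b_k − 1, and let x ∈ {0,1}^ℤ be such that for every k the set supp(x) mod b_k has cardinality at most b_k − s_k. Then for every n ∈ ℤ, the number of elements of supp(x) in the interval {n, n+1, …, n + b_1⋯b_K − 1} is at most ∏_{k=1}^K (b_k − s_k). Consequently the density of supp(x) in any such interval is at most ∏_{k=1}^K (1 − s_k/b_k). -/
theorem stmt5 (K : ℕ) (b s : Fin K → ℕ)
    (hb : ∀ k, 2 ≤ b k) (hcop : ∀ i j, i ≠ j → Nat.Coprime (b i) (b j))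
    (hs : ∀ k, 1 ≤ s k ∧ s k ≤ b k - 1)
    (x : ℤ → Bool)
    (hsupp : ∀ k,
      ({z : ZMod (b k) | ∃ m : ℤ, x m = true ∧ (m : ZMod (b k)) = z}).ncard ≤ b k - s k) :
    ∀ n : ℤ,
      (((Finset.Ico n (n + ((∏ k, b k : ℕ) : ℤ))).filter (fun m => x m = true)).card
          ≤ ∏ k, (b k - s k)) ∧
      ((((Finset.Ico n (n + ((∏ k, b k : ℕ) : ℤ))).filter (fun m => x m = true)).card : ℝ)
          / ((∏ k, b k : ℕ) : ℝ) ≤ ∏ k, (1 - (s k : ℝ) / (b k : ℝ))) := by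
  classical
  intro n
  haveI : ∀ k, NeZero (b k) := fun k => ⟨by have := hb k; omega⟩
  set N : ℕ := ∏ k, b k with hN
  have hNpos : 0 < N := Finset.prod_pos (fun k _ => by have := hb k; omega)
  set F : Finset ℤ := (Finset.Ico n (n + (N : ℤ))).filter (fun m => x m = true) with hF
  have hfin : ∀ k, ({z : ZMod (b k) | ∃ m : ℤ, x m = true ∧ (m : ZMod (b k)) = z}).Finite :=
    fun k => Set.toFinite _
  set T : ∀ k, Finset (ZMod (b k)) := fun k => (hfin k).toFinset with hT
  set f : ℤ → (∀ k, ZMod (b k)) := fun m k => (m : ZMod (b k)) with hf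
  have hmaps : ∀ m ∈ F, f m ∈ Fintype.piFinset T := by
    intro m hm
    simp only [hF, Finset.mem_filter] at hm
    refine Fintype.mem_piFinset.2 fun k => ?_
    simp only [hT, Set.Finite.mem_toFinset, Set.mem_setOf_eq]
    exact ⟨m, hm.2, rfl⟩
  have hinj : Set.InjOn f ↑F := by
    intro a ha b' hb' hab
    simp only [hF, Finset.coe_filter, Set.mem_setOf_eq, Finset.mem_Ico] at ha hb'
    have h1 : ∀ k, (b k : ℤ) ∣ a - b' := by
      intro k
      have h2 : ((a : ZMod (b k))) = (b' : ZMod (b k)) := congrFun hab k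
      have h3 : ((a - b' : ℤ) : ZMod (b k)) = 0 := by push_cast; rw [h2]; ring
      exact (ZMod.intCast_zmod_eq_zero_iff_dvd _ _).1 h3
    have hpair : Set.Pairwise ↑(Finset.univ : Finset (Fin K))
        (Function.onFun IsCoprime fun k => (b k : ℤ)) := by
      intro i _ j _ hij
      exact Nat.isCoprime_iff_coprime.2 (hcop i j hij)
    have hdvd : (N : ℤ) ∣ a - b' := by
      have := Finset.prod_dvd_of_coprime hpair (fun i _ => h1 i)
      simpa [hN] using this
    have := Int.eq_zero_of_abs_lt_dvd hdvd (by
      rw [abs_sub_lt_iff]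
      constructor <;> omega)
    omega
  have hcard : F.card ≤ ∏ k, (b k - s k) := by
    calc F.card ≤ (Fintype.piFinset T).card := Finset.card_le_card_of_injOn f hmaps hinj
    _ = ∏ k, (T k).card := Fintype.card_piFinset T
    _ ≤ ∏ k, (b k - s k) := by
        refine Finset.prod_le_prod' fun k _ => ?_
        have := hsupp k
        rwa [Set.ncard_eq_toFinset_card _ (hfin k)] at this
  refine ⟨hcard, ?_⟩
  have hcast : ∀ k, ((b k - s k : ℕ) : ℝ) = (b k : ℝ) - (s k : ℝ) := by
    intro k
    have h1 := (hs k).2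
    have h2 := hb k
    exact Nat.cast_sub (by omega)
  have heq : ∏ k, (1 - (s k : ℝ) / (b k : ℝ)) = ((∏ k, (b k - s k) : ℕ) : ℝ) / (N : ℝ) := by
    rw [Nat.cast_prod, hN, Nat.cast_prod, ← Finset.prod_div_distrib]
    refine Finset.prod_congr rfl fun k _ => ?_
    have hb0 : (b k : ℝ) ≠ 0 := by
      have := hb k; positivity
    rw [hcast k]
    field_simp
  rw [heq]
  have hN0 : (0:ℝ) < (N : ℝ) := by exact_mod_cast hNpos
  gcongr
end

section
/- Let C ∈ {0,1}^n be a finite word with smallest period n, let x_C ∈ {0,1}^ℤ be the bi-infinite periodic concatenation of C, let X_C be its (finite) orbit under the shift, and let X̃_C be the smallest hereditary subshift containing X_C. Then h_top(S, X̃_C) = d·log 2, where d = |supp C|/|C| is the fraction of 1's in C. -/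
open Filter

/-- The set of words of length `n` occurring in points of `X`. -/
def wordsOf (X : Set (ℤ → Bool)) (n : ℕ) : Set (Fin n → Bool) :=
  {w | ∃ x ∈ X, ∃ i : ℤ, ∀ j : Fin n, x (i + (j : ℤ)) = w j}

/-- The smallest hereditary subshift containing `X`. -/
def hereditaryClosure (X : Set (ℤ → Bool)) : Set (ℤ → Bool) :=
  {y | ∃ x ∈ X, ∀ n, y n ≤ x n}

section Aux
variable (x : ℤ → Bool) (n : ℕ)

noncomputable def cnt (a b : ℤ) : ℕ :=
  ((Finset.Ico a b).filter (fun i => x i = true)).card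

lemma per_mul (hper : ∀ i : ℤ, x (i + (n : ℤ)) = x i) (i t : ℤ) :
    x (i + (n : ℤ) * t) = x i := by
  induction t using Int.induction_on with
  | zero => simp
  | succ t ih => rw [mul_add, mul_one, ← add_assoc, hper, ih]
  | pred t ih =>
      have h := hper (i + (n:ℤ) * (-(t:ℤ) - 1))
      rw [show i + (n:ℤ) * (-(t:ℤ) - 1) + (n:ℤ) = i + (n:ℤ) * (-(t:ℤ)) by ring] at h
      rw [← ih, h]

lemma cnt_shift (hper : ∀ i : ℤ, x (i + (n : ℤ)) = x i) (a b t : ℤ) :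
    cnt x (a + (n:ℤ)*t) (b + (n:ℤ)*t) = cnt x a b := by
  unfold cnt
  rw [← Finset.map_add_right_Ico, Finset.filter_map, Finset.card_map]
  congr 1
  apply Finset.filter_congr
  intro i _
  simp only [Function.comp, addRightEmbedding_apply]
  rw [per_mul x n hper i t]

lemma cnt_add (a b c : ℤ) (h1 : a ≤ b) (h2 : b ≤ c) :
    cnt x a c = cnt x a b + cnt x b c := by
  unfold cnt
  rw [← Finset.Ico_union_Ico_eq_Ico h1 h2, Finset.filter_union,
    Finset.card_union_of_disjoint]
  exact Finset.disjoint_filter_filter (Finset.Ico_disjoint_Ico_consecutive a b c)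

lemma cnt_mono (a b a' b' : ℤ) (h1 : a' ≤ a) (h2 : b ≤ b') : cnt x a b ≤ cnt x a' b' :=
  Finset.card_le_card (Finset.filter_subset_filter _ (Finset.Ico_subset_Ico h1 h2))

lemma cnt_blocks (hn : 0 < n) (hper : ∀ i : ℤ, x (i + (n : ℤ)) = x i) (t : ℕ) :
    cnt x 0 ((t:ℤ) * n) = t * cnt x 0 n := by
  induction t with
  | zero => simp [cnt]
  | succ t ih =>
      have h0 : (0:ℤ) ≤ (t:ℤ) * n := by positivity
      have key : cnt x ((t:ℤ)*n) (((t:ℤ)+1)*n) = cnt x 0 n := by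
        have h := cnt_shift x n hper 0 (n:ℤ) (t:ℤ)
        rw [zero_add, show (n:ℤ) + n*t = ((t:ℤ)+1)*n by ring, show (n:ℤ)*t = (t:ℤ)*n by ring] at h
        exact h
      have hnn : (0:ℤ) < (n:ℤ) := by exact_mod_cast hn
      rw [show (((t+1:ℕ)):ℤ) * n = ((t:ℤ)+1)*n by push_cast; ring,
        cnt_add x 0 ((t:ℤ)*n) (((t:ℤ)+1)*n) h0 (by nlinarith), ih, key]
      ring

lemma cnt_translate (a b t : ℤ) :
    ((Finset.Ico a b).filter (fun i => x (i + t) = true)).card = cnt x (a+t) (b+t) := by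
  unfold cnt
  rw [← Finset.map_add_right_Ico, Finset.filter_map, Finset.card_map]
  rfl

end Aux

open scoped Classical in
lemma card_dominated (m : ℕ) (T : Finset (Fin m)) :
    (Finset.univ.filter (fun w : Fin m → Bool => ∀ j, w j = true → j ∈ T)).card
      = 2 ^ T.card := by
  rw [← Finset.card_powerset]
  refine Finset.card_bij' (fun w _ => Finset.univ.filter (fun j => w j = true))
    (fun s _ => fun j => decide (j ∈ s)) ?hi ?hj ?left ?right
  case hi =>
    intro w hw
    simp only [Finset.mem_filter, Finset.mem_univ, true_and] at hw
    rw [Finset.mem_powerset]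
    intro j hj
    simp only [Finset.mem_filter, Finset.mem_univ, true_and] at hj
    exact hw j hj
  case hj =>
    intro s hs
    rw [Finset.mem_powerset] at hs
    simp only [Finset.mem_filter, Finset.mem_univ, true_and]
    intro j hj
    exact hs (by simpa using hj)
  case left =>
    intro w hw
    funext j
    by_cases h : w j = true <;> simp [h]
  case right =>
    intro s hs
    ext j
    simp

open scoped Classical in
lemma bridge (m : ℕ) (P : ℤ → Prop) [DecidablePred P] :
    (Finset.univ.filter (fun j : Fin m => P ((j:ℕ):ℤ))).card
      = ((Finset.Ico (0:ℤ) (m:ℤ)).filter P).card := by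
  refine Finset.card_bij' (fun (j : Fin m) _ => ((j:ℕ):ℤ))
    (fun i hi => (⟨i.toNat, by
      simp only [Finset.mem_filter, Finset.mem_Ico] at hi; omega⟩ : Fin m)) ?hi ?hj ?left ?right
  case hi =>
    intro j hj
    simp only [Finset.mem_filter, Finset.mem_univ, true_and] at hj
    simp only [Finset.mem_filter, Finset.mem_Ico]
    exact ⟨⟨by positivity, by exact_mod_cast j.isLt⟩, hj⟩
  case hj =>
    intro i hi
    simp only [Finset.mem_filter, Finset.mem_Ico] at hi
    simp only [Finset.mem_filter, Finset.mem_univ, true_and]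
    have h3 : (((⟨i.toNat, by omega⟩ : Fin m) : ℕ) : ℤ) = i := by simp; omega
    rw [h3]
    exact hi.2
  case left =>
    intro j hj
    apply Fin.ext
    simp
  case right =>
    intro i hi
    simp only [Finset.mem_filter, Finset.mem_Ico] at hi
    simp
    omega

lemma mem_words_iff (x : ℤ → Bool) (m : ℕ) (w : Fin m → Bool) :
    w ∈ wordsOf (hereditaryClosure {y : ℤ → Bool | ∃ k : ℤ, ∀ i, y i = x (i + k)}) m ↔
    ∃ k : ℤ, ∀ j : Fin m, w j = true → x (((j:ℕ):ℤ) + k) = true := by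
  constructor
  · rintro ⟨y, ⟨z, ⟨k, hz⟩, hyz⟩, i, hw⟩
    refine ⟨i + k, fun j hj => ?_⟩
    have h1 : y (i + ((j:ℕ):ℤ)) = true := by rw [hw j]; exact hj
    have h2 := hyz (i + ((j:ℕ):ℤ))
    rw [Bool.le_iff_imp] at h2
    have h3 := h2 h1
    rw [hz] at h3
    rw [show ((j:ℕ):ℤ) + (i + k) = i + ((j:ℕ):ℤ) + k by ring]
    exact h3
  · rintro ⟨k, hk⟩
    classical
    refine ⟨fun i => if h : 0 ≤ i ∧ i < (m:ℤ) then w ⟨i.toNat, by omega⟩ else false,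
      ⟨fun i => x (i + k), ⟨k, fun i => rfl⟩, ?_⟩, 0, ?_⟩
    · intro i
      by_cases h : 0 ≤ i ∧ i < (m:ℤ)
      · simp only [dif_pos h]
        rw [Bool.le_iff_imp]
        intro hw'
        have h2 := hk ⟨i.toNat, by omega⟩ hw'
        have h3 : (((⟨i.toNat, by omega⟩ : Fin m) : ℕ) : ℤ) = i := by
          simp [Int.toNat_of_nonneg h.1]
        rwa [h3] at h2
      · simp only [dif_neg h]
        exact Bool.false_le _
    · intro j
      have h : 0 ≤ (0:ℤ) + ((j:ℕ):ℤ) ∧ (0:ℤ) + ((j:ℕ):ℤ) < (m:ℤ) := by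
        constructor
        · positivity
        · have := j.isLt; omega
      simp only []
      rw [dif_pos h]
      congr 1
      apply Fin.ext
      simp

open scoped Classical in
noncomputable def wordFinset (x : ℤ → Bool) (m : ℕ) : Finset (Fin m → Bool) :=
  Finset.univ.filter (fun w => ∃ k : ℤ, ∀ j : Fin m, w j = true → x (((j:ℕ):ℤ) + k) = true)

lemma words_eq_coe (x : ℤ → Bool) (m : ℕ) :
    wordsOf (hereditaryClosure {y : ℤ → Bool | ∃ k : ℤ, ∀ i, y i = x (i + k)}) m
      = ↑(wordFinset x m) := by
  ext w
  simp only [wordFinset, Finset.coe_filter, Finset.mem_univ, true_and, Set.mem_setOf_eq]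
  exact mem_words_iff x m w

open scoped Classical in
lemma wordFinset_lower (x : ℤ → Bool) (n : ℕ) (hn : 0 < n)
    (hper : ∀ i : ℤ, x (i + (n : ℤ)) = x i) (m : ℕ) :
    2 ^ ((m / n) * cnt x 0 n) ≤ (wordFinset x m).card := by
  set T : Finset (Fin m) := Finset.univ.filter (fun j => x ((j:ℕ):ℤ) = true) with hT
  have hsub : (Finset.univ.filter (fun w : Fin m → Bool => ∀ j, w j = true → j ∈ T))
      ⊆ wordFinset x m := by
    intro w hw
    simp only [Finset.mem_filter, Finset.mem_univ, true_and, hT] at hw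
    simp only [wordFinset, Finset.mem_filter, Finset.mem_univ, true_and]
    refine ⟨0, fun j hj => ?_⟩
    have := hw j hj
    rwa [add_zero]
  have hcard : (Finset.univ.filter (fun w : Fin m → Bool => ∀ j, w j = true → j ∈ T)).card
      = 2 ^ T.card := card_dominated m T
  have hTcard : T.card = cnt x 0 m := by
    rw [hT]
    exact bridge m (fun i => x i = true)
  have hge : (m / n) * cnt x 0 n ≤ cnt x 0 m := by
    rw [← cnt_blocks x n hn hper (m / n)]
    apply cnt_mono
    · exact le_refl 0
    · exact_mod_cast Nat.div_mul_le_self m n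
  calc 2 ^ ((m / n) * cnt x 0 n) ≤ 2 ^ T.card := by
        rw [hTcard]; exact Nat.pow_le_pow_right (by norm_num) hge
    _ = (Finset.univ.filter (fun w : Fin m → Bool => ∀ j, w j = true → j ∈ T)).card :=
        hcard.symm
    _ ≤ (wordFinset x m).card := Finset.card_le_card hsub

open scoped Classical in
lemma wordFinset_upper (x : ℤ → Bool) (n : ℕ) (hn : 0 < n)
    (hper : ∀ i : ℤ, x (i + (n : ℤ)) = x i) (m : ℕ) :
    (wordFinset x m).card ≤ n * 2 ^ ((m / n + 2) * cnt x 0 n) := by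
  have hnz : (0:ℤ) < (n:ℤ) := by exact_mod_cast hn
  have hsub : wordFinset x m ⊆ (Finset.Ico (0:ℤ) (n:ℤ)).biUnion
      (fun k => Finset.univ.filter
        (fun w : Fin m → Bool => ∀ j, w j = true → x (((j:ℕ):ℤ) + k) = true)) := by
    intro w hw
    simp only [wordFinset, Finset.mem_filter, Finset.mem_univ, true_and] at hw
    obtain ⟨k, hk⟩ := hw
    rw [Finset.mem_biUnion]
    refine ⟨k % (n:ℤ), ?_, ?_⟩
    · rw [Finset.mem_Ico]
      exact ⟨Int.emod_nonneg k (by omega), Int.emod_lt_of_pos k hnz⟩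
    · simp only [Finset.mem_filter, Finset.mem_univ, true_and]
      intro j hj
      have h1 := hk j hj
      have h2 : ((j:ℕ):ℤ) + k = ((j:ℕ):ℤ) + k % (n:ℤ) + (n:ℤ) * (k / (n:ℤ)) := by
        have := Int.emod_add_mul_ediv k (n:ℤ)
        linarith
      rw [h2, per_mul x n hper] at h1
      exact h1
  have hbound : ∀ k ∈ Finset.Ico (0:ℤ) (n:ℤ),
      (Finset.univ.filter
        (fun w : Fin m → Bool => ∀ j, w j = true → x (((j:ℕ):ℤ) + k) = true)).card
        ≤ 2 ^ ((m / n + 2) * cnt x 0 n) := by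
    intro k hk
    rw [Finset.mem_Ico] at hk
    set T : Finset (Fin m) := Finset.univ.filter (fun j => x (((j:ℕ):ℤ) + k) = true) with hT
    have heq : (Finset.univ.filter
        (fun w : Fin m → Bool => ∀ j, w j = true → x (((j:ℕ):ℤ) + k) = true))
        = Finset.univ.filter (fun w : Fin m → Bool => ∀ j, w j = true → j ∈ T) := by
      apply Finset.filter_congr
      intro w _
      constructor
      · intro h j hj2
        simp only [hT, Finset.mem_filter, Finset.mem_univ, true_and]
        exact h j hj2
      · intro h j hj2
        have := h j hj2
        simp only [hT, Finset.mem_filter, Finset.mem_univ, true_and] at this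
        exact this
    rw [heq, card_dominated m T]
    apply Nat.pow_le_pow_right (by norm_num)
    have hTcard : T.card = cnt x k ((m:ℤ) + k) := by
      rw [hT, bridge m (fun i => x (i + k) = true), cnt_translate, zero_add]
    rw [hTcard]
    have hmlt : (m:ℤ) + k ≤ (((m / n + 2 : ℕ)):ℤ) * n := by
      have h1 : ((m / n : ℕ) : ℤ) * (n:ℤ) + ((m % n : ℕ) : ℤ) = (m:ℤ) := by
        rw [mul_comm]
        exact_mod_cast Nat.div_add_mod m n
      have h2 : ((m % n : ℕ) : ℤ) < (n:ℤ) := by exact_mod_cast Nat.mod_lt m hn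
      have h3 : ((m / n + 2 : ℕ) : ℤ) = ((m / n : ℕ) : ℤ) + 2 := by push_cast; ring
      rw [h3]
      linarith [hk.1, hk.2]
    calc cnt x k ((m:ℤ) + k) ≤ cnt x 0 ((((m / n + 2 : ℕ)):ℤ) * n) :=
          cnt_mono x k ((m:ℤ)+k) 0 _ hk.1 hmlt
      _ = (m / n + 2) * cnt x 0 n := cnt_blocks x n hn hper _
  calc (wordFinset x m).card
      ≤ ((Finset.Ico (0:ℤ) (n:ℤ)).biUnion _).card := Finset.card_le_card hsub
    _ ≤ ∑ k ∈ Finset.Ico (0:ℤ) (n:ℤ), (Finset.univ.filter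
        (fun w : Fin m → Bool => ∀ j, w j = true → x (((j:ℕ):ℤ) + k) = true)).card :=
      Finset.card_biUnion_le
    _ ≤ ∑ _k ∈ Finset.Ico (0:ℤ) (n:ℤ), 2 ^ ((m / n + 2) * cnt x 0 n) :=
      Finset.sum_le_sum hbound
    _ = n * 2 ^ ((m / n + 2) * cnt x 0 n) := by
      rw [Finset.sum_const, Int.card_Ico]
      simp

open scoped Classical in
theorem stmt10 (n : ℕ) (hn : 0 < n) (x : ℤ → Bool)
    (hper : ∀ i : ℤ, x (i + (n : ℤ)) = x i)
    (hmin : ∀ p : ℤ, 0 < p → (∀ i, x (i + p) = x i) → (n : ℤ) ∣ p) :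
    Tendsto
      (fun m : ℕ =>
        Real.log ((wordsOf
          (hereditaryClosure {y : ℤ → Bool | ∃ k : ℤ, ∀ i, y i = x (i + k)}) m).ncard) / m)
      atTop
      (nhds ((((Finset.Ico (0 : ℤ) (n : ℤ)).filter (fun i => x i = true)).card : ℝ) / (n : ℝ)
        * Real.log 2)) := by
  have hfun : (fun m : ℕ =>
      Real.log ((wordsOf
        (hereditaryClosure {y : ℤ → Bool | ∃ k : ℤ, ∀ i, y i = x (i + k)}) m).ncard) / m)
      = fun m : ℕ => Real.log ((wordFinset x m).card) / m := by
    funext m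
    rw [words_eq_coe, Set.ncard_coe_finset]
  rw [hfun]
  set d : ℕ := cnt x 0 (n:ℤ) with hd
  have htarget : (((Finset.Ico (0 : ℤ) (n : ℤ)).filter (fun i => x i = true)).card : ℝ)
      = (d:ℝ) := by rw [hd]; rfl
  rw [htarget]
  set c : ℝ := (d:ℝ) * Real.log 2 with hc
  have hc0 : 0 ≤ c := by
    rw [hc]; positivity
  have npos : (0:ℝ) < (n:ℝ) := by exact_mod_cast hn
  -- squeeze
  apply tendsto_of_tendsto_of_tendsto_of_le_of_le'
    (g := fun m : ℕ => (1/(n:ℝ)) * c - (1/(m:ℝ)) * c)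
    (h := fun m : ℕ => Real.log n * (1/(m:ℝ)) + (1/(n:ℝ)) * c + (2*c) * (1/(m:ℝ)))
  · -- g tendsto
    have h1 : Tendsto (fun m : ℕ => (1/(n:ℝ)) * c - (1/(m:ℝ)) * c) atTop
        (nhds ((1/(n:ℝ)) * c - 0 * c)) :=
      tendsto_const_nhds.sub (tendsto_one_div_atTop_nhds_zero_nat.mul_const c)
    have h2 : (1/(n:ℝ)) * c - 0 * c = (d:ℝ)/(n:ℝ) * Real.log 2 := by rw [hc]; ring
    rwa [h2] at h1
  · -- h tendsto
    have h1 : Tendsto (fun m : ℕ =>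
        Real.log n * (1/(m:ℝ)) + (1/(n:ℝ)) * c + (2*c) * (1/(m:ℝ))) atTop
        (nhds (Real.log n * 0 + (1/(n:ℝ)) * c + (2*c) * 0)) :=
      ((tendsto_one_div_atTop_nhds_zero_nat.const_mul _).add tendsto_const_nhds).add
        (tendsto_one_div_atTop_nhds_zero_nat.const_mul _)
    have h2 : Real.log n * 0 + (1/(n:ℝ)) * c + (2*c) * 0 = (d:ℝ)/(n:ℝ) * Real.log 2 := by
      rw [hc]; ring
    rwa [h2] at h1
  · -- lower bound
    filter_upwards [eventually_ge_atTop 1] with m hm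
    have mpos : (0:ℝ) < (m:ℝ) := by exact_mod_cast hm
    set q : ℕ := m / n with hq
    have hq2 : m < q * n + n := by
      have h1 : n * q + m % n = m := by rw [hq]; exact Nat.div_add_mod m n
      have h2 := Nat.mod_lt m hn
      rw [mul_comm]
      omega
    have hq2' : (m:ℝ) < (q:ℝ) * n + n := by exact_mod_cast hq2
    have hNl : 2 ^ (q * d) ≤ (wordFinset x m).card := wordFinset_lower x n hn hper m
    have hlogl : ((q*d : ℕ):ℝ) * Real.log 2 ≤ Real.log ((wordFinset x m).card) := by
      have h1 : ((2:ℝ))^(q*d) ≤ ((wordFinset x m).card : ℝ) := by exact_mod_cast hNl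
      have h2 := Real.log_le_log (by positivity) h1
      rwa [Real.log_pow] at h2
    have keyq : 1/(n:ℝ) - 1/(m:ℝ) ≤ (q:ℝ)/(m:ℝ) := by
      rw [div_sub_div _ _ (ne_of_gt npos) (ne_of_gt mpos),
        div_le_div_iff₀ (by positivity) mpos]
      nlinarith
    calc 1/(n:ℝ) * c - 1/(m:ℝ) * c = (1/(n:ℝ) - 1/(m:ℝ)) * c := by ring
      _ ≤ ((q:ℝ)/(m:ℝ)) * c := mul_le_mul_of_nonneg_right keyq hc0
      _ = ((q*d : ℕ):ℝ) * Real.log 2 / m := by rw [hc]; push_cast; ring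
      _ ≤ Real.log ((wordFinset x m).card) / m := by
          apply div_le_div_of_nonneg_right hlogl mpos.le
  · -- upper bound
    filter_upwards [eventually_ge_atTop 1] with m hm
    have mpos : (0:ℝ) < (m:ℝ) := by exact_mod_cast hm
    set q : ℕ := m / n with hq
    have hq1 : q * n ≤ m := Nat.div_mul_le_self m n
    have hq1' : (q:ℝ) * n ≤ (m:ℝ) := by exact_mod_cast hq1
    have hNl : 2 ^ (q * d) ≤ (wordFinset x m).card := wordFinset_lower x n hn hper m
    have hN1 : 1 ≤ (wordFinset x m).card := le_trans (Nat.one_le_two_pow) hNl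
    have hNu : (wordFinset x m).card ≤ n * 2 ^ ((q + 2) * d) :=
      wordFinset_upper x n hn hper m
    have hlogu : Real.log ((wordFinset x m).card)
        ≤ Real.log n + (((q+2)*d : ℕ):ℝ) * Real.log 2 := by
      have h1 : ((wordFinset x m).card : ℝ) ≤ (n:ℝ) * (2:ℝ)^((q+2)*d) := by
        exact_mod_cast hNu
      have h2 := Real.log_le_log (by exact_mod_cast hN1) h1
      rwa [Real.log_mul (ne_of_gt npos) (by positivity), Real.log_pow] at h2
    have keyq2 : (q:ℝ)/(m:ℝ) ≤ 1/(n:ℝ) := by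
      rw [div_le_div_iff₀ mpos npos]
      nlinarith
    have k1 : ((q:ℝ) * d * Real.log 2)/m ≤ (1/(n:ℝ)) * c := by
      have := mul_le_mul_of_nonneg_right keyq2 hc0
      calc ((q:ℝ) * d * Real.log 2)/m = ((q:ℝ)/(m:ℝ)) * c := by rw [hc]; ring
        _ ≤ (1/(n:ℝ)) * c := this
    calc Real.log ((wordFinset x m).card) / m
        ≤ (Real.log n + (((q+2)*d : ℕ):ℝ) * Real.log 2)/m :=
          div_le_div_of_nonneg_right hlogu mpos.le
      _ = Real.log n * (1/(m:ℝ)) + ((q:ℝ) * d * Real.log 2)/m + (2*c) * (1/(m:ℝ)) := by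
          rw [hc]; push_cast; ring
      _ ≤ Real.log n * (1/(m:ℝ)) + (1/(n:ℝ)) * c + (2*c) * (1/(m:ℝ)) := by linarith
end

section
/- With 𝔅, Ω, φ as above, define θ on Y = {x ∈ X_η : ∀k, |supp(x) mod b_k| = b_k − 1} by θ(y) = ω where −ω(k) is the unique residue mod b_k missed by supp(y). Then θ is equivariant: θ(Sy) = Tθ(y), where S is the shift and Tω = ω + (1,1,1,…). Moreover y ≤ φ(θ(y)) coordinatewise for every y ∈ Y. -/
theorem stmt13 (b : ℕ → ℕ) (hb : ∀ k, 2 ≤ b k)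
    (hcop : ∀ i j, i ≠ j → Nat.Coprime (b i) (b j))
    (hsum : Summable fun k => (1 : ℝ) / b k)
    (φ : (∀ k, ZMod (b k)) → ℤ → Bool)
    (hφ : ∀ ω n, φ ω n = true ↔ ∀ k, ω k + (n : ZMod (b k)) ≠ 0)
    (Y : Set (ℤ → Bool))
    (hY : Y = {y | ∀ k, ∃! z : ZMod (b k), ∀ m : ℤ, y m = true → (m : ZMod (b k)) ≠ z})
    (θ : (ℤ → Bool) → ∀ k, ZMod (b k))
    (hθ : ∀ y ∈ Y, ∀ k, ∀ m : ℤ, y m = true → (m : ZMod (b k)) ≠ -(θ y k)) :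
    ∀ y ∈ Y,
      (∀ k, θ (fun m => y (m + 1)) k = θ y k + 1) ∧
      (∀ m, y m ≤ φ (θ y) m) := by
  intro y hy
  have hy' : ∀ k, ∃! z : ZMod (b k), ∀ m : ℤ, y m = true → (m : ZMod (b k)) ≠ z := by
    rw [hY] at hy; exact hy
  have hSyY : (fun m => y (m + 1)) ∈ Y := by
    rw [hY]
    intro k
    obtain ⟨z, hz, huniq⟩ := hy' k
    refine ⟨z - 1, fun m hm h => ?_, fun w hw => ?_⟩
    · exact hz (m + 1) hm (by push_cast; rw [h]; ring)
    · have : w + 1 = z := by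
        apply huniq
        intro m hm h
        have := hw (m - 1) (by simpa using hm)
        apply this
        push_cast
        rw [h]; ring
      rw [← this]; ring
  constructor
  · intro k
    obtain ⟨z, hz, huniq⟩ := hy' k
    have h1 : -(θ y k) = z := huniq _ (hθ y hy k)
    have hSy' : ∀ k, ∃! z : ZMod (b k),
        ∀ m : ℤ, (fun m => y (m + 1)) m = true → (m : ZMod (b k)) ≠ z := by
      rw [hY] at hSyY; exact hSyY
    obtain ⟨w, hw, hwuniq⟩ := hSy' k
    have h2 : -(θ (fun m => y (m + 1)) k) = w := hwuniq _ (hθ _ hSyY k)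
    have h3 : z - 1 = w := by
      apply hwuniq
      intro m hm h
      exact hz (m + 1) hm (by push_cast; rw [h]; ring)
    have : -(θ (fun m => y (m + 1)) k) = z - 1 := by rw [h2, h3]
    have h4 : θ (fun m => y (m + 1)) k = 1 - z := by
      have := congrArg Neg.neg this; simpa using this
    rw [h4]
    have : θ y k = -z := by
      have := congrArg Neg.neg h1; simpa using this
    rw [this]; ring
  · intro m
    cases h : y m with
    | false => simp
    | true =>
      have : φ (θ y) m = true := by
        rw [hφ]
        intro k hk
        exact hθ y hy k m h (by rw [← neg_eq_iff_add_eq_zero.mpr hk])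
      rw [this]
end

section
/- Let α be an irrational with all partial quotients bounded by 2 (so ‖kα‖ ≥ 1/(6|k|) for k ≠ 0). If β is a real number with |α − β| < 1/(48n²), then every word of length n occurring in the Sturmian-type sequence x^{(β)} (defined by x^{(β)}(m) = 1 iff {mβ} ∈ [0,1/2)) also occurs in x^{(α)}. -/
private lemma round_min (x : ℝ) (k : ℤ) : |x - round x| ≤ |x - k| := by
  rcases eq_or_ne k (round x) with h | h
  · rw [h]
  · have h0 : (1:ℝ) ≤ |((round x : ℤ):ℝ) - (k:ℝ)| := by
      rw [← Int.cast_sub, ← Int.cast_abs]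
      exact_mod_cast Int.one_le_abs (sub_ne_zero.mpr (Ne.symm h))
    have h2 : |x - round x| ≤ 1/2 := abs_sub_round x
    have h3 := abs_sub_le ((round x : ℤ):ℝ) x (k:ℝ)
    have h4 : |((round x : ℤ):ℝ) - x| = |x - ((round x : ℤ):ℝ)| := abs_sub_comm _ _
    linarith

private lemma fract_lt_half (y : ℝ) : Int.fract y < 1/2 ↔ Even ⌊(2:ℝ)*y⌋ := by
  have hf : (⌊y⌋:ℝ) ≤ y := Int.floor_le y
  have hf2 : y < ⌊y⌋ + 1 := Int.lt_floor_add_one y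
  have hfr : Int.fract y = y - ⌊y⌋ := rfl
  constructor
  · intro h
    have : ⌊(2:ℝ)*y⌋ = 2*⌊y⌋ := by
      rw [Int.floor_eq_iff]
      constructor <;> push_cast <;> linarith [hfr ▸ Int.fract_nonneg y]
    rw [this]
    exact even_two_mul _
  · intro h
    by_contra hc
    push_neg at hc
    have : ⌊(2:ℝ)*y⌋ = 2*⌊y⌋ + 1 := by
      rw [Int.floor_eq_iff]
      constructor <;> push_cast <;> linarith [hfr ▸ Int.fract_lt_one y]
    rw [this] at h
    simp [Int.even_add_one, parity_simps] at h
    obtain ⟨t, ht⟩ := h; omega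

private lemma dense_orbit (α : ℝ) (hirr : Irrational α) (p ε : ℝ) (hε : 0 < ε) :
    ∃ m K : ℤ, |(m:ℝ) * α - p - K| < ε := by
  rcases (AddSubgroup.closure ({α, 1} : Set ℝ)).dense_or_cyclic with hd | ⟨a, ha⟩
  · have hp : p ∈ closure ((AddSubgroup.closure ({α, 1} : Set ℝ)) : Set ℝ) := hd p
    rw [Metric.mem_closure_iff] at hp
    obtain ⟨x, hx, hdist⟩ := hp ε hε
    have hx' : x ∈ AddSubgroup.closure ({α, 1} : Set ℝ) := hx
    rw [AddSubgroup.mem_closure_pair] at hx'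
    obtain ⟨m, K, hmk⟩ := hx'
    refine ⟨m, -K, ?_⟩
    have : (m:ℝ) * α - p - ((-K : ℤ):ℝ) = x - p := by
      rw [← hmk]; push_cast [zsmul_eq_mul]; ring
    rw [this, ← Real.dist_eq, dist_comm]
    exact hdist
  · exfalso
    have hα : α ∈ AddSubgroup.closure ({α, 1} : Set ℝ) :=
      AddSubgroup.subset_closure (by simp)
    have h1 : (1:ℝ) ∈ AddSubgroup.closure ({α, 1} : Set ℝ) :=
      AddSubgroup.subset_closure (by simp)
    rw [ha, AddSubgroup.mem_closure_singleton] at hα h1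
    obtain ⟨q, hq⟩ := hα
    obtain ⟨r, hr⟩ := h1
    have hq' : (q:ℝ) * a = α := by rw [← hq, zsmul_eq_mul]
    have hr' : (r:ℝ) * a = 1 := by rw [← hr, zsmul_eq_mul]
    have hr0 : (r:ℝ) ≠ 0 := by
      rintro h; rw [h] at hr'; simp at hr'
    refine hirr ⟨(q : ℚ)/(r : ℚ), ?_⟩
    push_cast
    rw [div_eq_iff (by exact_mod_cast hr0), ← hq']
    have ha' : a = 1 / r := by field_simp; linarith [hr']
    rw [ha']
    field_simp

private lemma abs_cast_sub_le (n j k : ℕ) (hj : j < n) (hk : k < n) :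
    |(j:ℝ) - (k:ℝ)| ≤ (n:ℝ) := by
  have h1 : (j:ℝ) < n := by exact_mod_cast hj
  have h2 : (k:ℝ) < n := by exact_mod_cast hk
  have h3 : (0:ℝ) ≤ j := Nat.cast_nonneg j
  have h4 : (0:ℝ) ≤ k := Nat.cast_nonneg k
  rw [abs_le]; constructor <;> linarith

private lemma half_sep (α : ℝ)
    (hbound : ∀ k : ℤ, k ≠ 0 →
      1 / (6 * |(k : ℝ)|) ≤ |(k : ℝ) * α - ((round ((k : ℝ) * α) : ℤ) : ℝ)|)
    (n : ℕ) (hn' : (0:ℝ) < n) (mm G : ℤ) (hmm0 : mm ≠ 0) (hle : |(mm:ℝ)| ≤ n) :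
    1/(24*(n:ℝ)) ≤ |(G:ℝ)/2 + (mm:ℝ)*α| := by
  have h2mm0 : (2*mm : ℤ) ≠ 0 := mul_ne_zero two_ne_zero hmm0
  have hb := hbound (2*mm) h2mm0
  have hrmin := round_min (((2*mm:ℤ):ℝ) * α) (-G)
  have e1 : ((2*mm:ℤ):ℝ)*α - ((-G:ℤ):ℝ) = 2*((G:ℝ)/2 + (mm:ℝ)*α) := by push_cast; ring
  have h1 : 1/(6*|((2*mm:ℤ):ℝ)|) ≤ 2*|(G:ℝ)/2 + (mm:ℝ)*α| := by
    have h := le_trans hb hrmin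
    rw [e1, abs_mul, abs_two] at h
    exact h
  have habs : |((2*mm:ℤ):ℝ)| = 2 * |(mm:ℝ)| := by
    push_cast; rw [abs_mul, abs_two]
  have hpos : (0:ℝ) < |(mm:ℝ)| := by
    have : (mm:ℝ) ≠ 0 := by exact_mod_cast hmm0
    exact abs_pos.mpr this
  have h2 : 1/(6*(2*(n:ℝ))) ≤ 1/(6*|((2*mm:ℤ):ℝ)|) := by
    apply one_div_le_one_div_of_le
    · rw [habs]; positivity
    · rw [habs]; linarith
  have h3 : 1/(6*(2*(n:ℝ))) = 2 * (1/(24*(n:ℝ))) := by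
    field_simp; ring
  rw [h3] at h2
  linarith [le_trans h2 h1]

theorem stmt18 (α β : ℝ) (hirr : Irrational α)
    (hbound : ∀ k : ℤ, k ≠ 0 →
      1 / (6 * |(k : ℝ)|) ≤ |(k : ℝ) * α - ((round ((k : ℝ) * α) : ℤ) : ℝ)|)
    (n : ℕ) (hn : 0 < n) (hβ : |α - β| < 1 / (48 * (n : ℝ) ^ 2)) :
    ∀ ℓ : ℤ, ∃ m : ℤ, ∀ j : ℕ, j < n →
      (Int.fract (((ℓ : ℝ) + (j : ℝ)) * β) < 1 / 2 ↔
        Int.fract (((m : ℝ) + (j : ℝ)) * α) < 1 / 2) := by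
  intro ℓ
  have hn' : (0:ℝ) < n := by exact_mod_cast hn
  have hn1 : (1:ℝ) ≤ n := by exact_mod_cast hn
  set s : ℝ := 1 / (24 * n) with hs
  have hspos : 0 < s := by positivity
  set g : ℕ → ℤ := fun j => ⌊(2:ℝ) * (((ℓ:ℝ) + j) * β)⌋ with hg
  set l : ℕ → ℝ := fun j => (g j : ℝ)/2 - (ℓ:ℝ)*β - j * α with hl
  set r : ℕ → ℝ := fun j => (g j : ℝ)/2 + 1/2 - (ℓ:ℝ)*β - j * α with hr
  have hfl : ∀ j : ℕ, (g j : ℝ) ≤ 2 * (((ℓ:ℝ) + j) * β) := fun j => Int.floor_le _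
  have hfu : ∀ j : ℕ, 2 * (((ℓ:ℝ) + j) * β) < g j + 1 := fun j => Int.lt_floor_add_one _
  have key : ∀ j : ℕ, j < n → ∀ k : ℕ, k < n → l j + s ≤ r k := by
    intro j hjn k hkn
    rcases eq_or_ne j k with rfl | hjk
    · have hle : s ≤ 1/2 := by
        rw [hs, div_le_div_iff₀ (by linarith) (by norm_num)]
        linarith
      simp only [hl, hr]; linarith
    · have hmm0 : ((j:ℤ) - k) ≠ 0 := sub_ne_zero.mpr (by exact_mod_cast hjk)
      have hmmle : |(((j:ℤ) - k : ℤ):ℝ)| ≤ n := by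
        push_cast
        exact abs_cast_sub_le n j k hjn hkn
      have hsep := half_sep α hbound n hn' ((j:ℤ) - k) (g k + 1 - g j) hmm0 hmmle
      set V : ℝ := r k - l j with hV
      have hVeq : V = ((g k + 1 - g j : ℤ):ℝ)/2 + (((j:ℤ) - k : ℤ):ℝ)*α := by
        simp only [hV, hr, hl]; push_cast; ring
      have hVlb : s ≤ |V| := by rw [hVeq, hs]; exact hsep
      -- lower bound V > -s
      have hrk : (k:ℝ) * (β - α) < r k := by
        simp only [hr]
        have h1 := hfu k
        have h2 : 2 * (((ℓ:ℝ) + k) * β) = 2*((ℓ:ℝ)*β) + 2*((k:ℝ)*β) := by ring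
        have h3 : (k:ℝ) * (β - α) = (k:ℝ)*β - (k:ℝ)*α := by ring
        linarith
      have hlj : l j ≤ (j:ℝ) * (β - α) := by
        simp only [hl]
        have h1 := hfl j
        have h2 : 2 * (((ℓ:ℝ) + j) * β) = 2*((ℓ:ℝ)*β) + 2*((j:ℝ)*β) := by ring
        have h3 : (j:ℝ) * (β - α) = (j:ℝ)*β - (j:ℝ)*α := by ring
        linarith
      have hsmall : |((k:ℝ) - j) * (β - α)| ≤ s/2 := by
        rw [abs_mul]
        have h1 : |(k:ℝ) - j| ≤ n := abs_cast_sub_le n k j hkn hjn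
        have h2 : |β - α| ≤ 1/(48 * (n:ℝ)^2) := by
          rw [abs_sub_comm]; exact le_of_lt hβ
        have h4 : |(k:ℝ) - j| * |β - α| ≤ (n:ℝ) * (1/(48*(n:ℝ)^2)) :=
          mul_le_mul h1 h2 (abs_nonneg _) (le_of_lt hn')
        have h5 : (n:ℝ) * (1/(48*(n:ℝ)^2)) = 1/(48*n) := by
          field_simp
        have h6 : s/2 = 1/(48*(n:ℝ)) := by rw [hs]; ring
        rw [h6]; rw [h5] at h4; exact h4
      have hVgt : -s < V := by
        have h1 : ((k:ℝ) - j) * (β - α) < V := by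
          have h2 : ((k:ℝ) - j) * (β - α) = (k:ℝ)*(β-α) - (j:ℝ)*(β-α) := by ring
          have h3 : V = r k - l j := hV
          linarith
        have h2 : -(s/2) ≤ ((k:ℝ) - j) * (β - α) := neg_le_of_abs_le hsmall
        linarith
      rcases abs_cases V with ⟨he, _⟩ | ⟨he, _⟩ <;> linarith
  have hne : (Finset.range n).Nonempty := ⟨0, Finset.mem_range.mpr hn⟩
  set L : ℝ := (Finset.range n).sup' hne l with hL
  obtain ⟨jL, hjL, hLeq⟩ := Finset.exists_mem_eq_sup' hne l
  have hLle : ∀ j : ℕ, j < n → l j ≤ L := fun j hj => Finset.le_sup' l (Finset.mem_range.mpr hj)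
  have hLr : ∀ k : ℕ, k < n → L + s ≤ r k := by
    intro k hk
    rw [← hL] at hLeq
    rw [hLeq]
    exact key jL (Finset.mem_range.mp hjL) k hk
  obtain ⟨m, K, hmK⟩ := dense_orbit α hirr ((ℓ:ℝ)*β + L + s/2) (s/4) (by positivity)
  refine ⟨m, ?_⟩
  intro j hj
  set u : ℝ := (m:ℝ)*α - K - (ℓ:ℝ)*β with hu
  have huL : L < u ∧ u < L + s := by
    have h1 : |u - (L + s/2)| < s/4 := by
      have h2 : u - (L + s/2) = (m:ℝ)*α - ((ℓ:ℝ)*β + L + s/2) - K := by rw [hu]; ring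
      rw [h2]; exact hmK
    rw [abs_lt] at h1
    constructor <;> linarith [h1.1, h1.2]
  have hul : l j ≤ u := le_of_lt (lt_of_le_of_lt (hLle j hj) huL.1)
  have hur : u < r j := lt_of_lt_of_le huL.2 (hLr j hj)
  have hfloor : ⌊(2:ℝ) * ((ℓ:ℝ)*β + j*α + u)⌋ = g j := by
    rw [Int.floor_eq_iff]
    simp only [hl] at hul
    simp only [hr] at hur
    constructor <;> push_cast <;> linarith
  have hrhs : ((m:ℝ) + j) * α = ((ℓ:ℝ)*β + j*α + u) + K := by
    rw [hu]; ring
  rw [fract_lt_half, fract_lt_half, hrhs]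
  have hfl2 : ⌊(2:ℝ) * (((ℓ:ℝ)*β + j*α + u) + K)⌋ = g j + 2*K := by
    rw [show (2:ℝ)*(((ℓ:ℝ)*β + j*α + u) + K) = (2*((ℓ:ℝ)*β + j*α + u)) + ((2*K : ℤ):ℝ) by push_cast; ring,
      Int.floor_add_intCast, hfloor]
  rw [hfl2]
  simp [hg, Int.even_add, parity_simps]
end

section
/- Let η ∈ {0,1}^ℤ be the indicator of the 𝔅-free numbers for 𝔅 = {b_k} pairwise coprime, ≥ 2, with ∑ 1/b_k < ∞. For every nonempty finite A ⊂ ℤ, the density (with respect to the Mirsky measure / as a limiting frequency along the odometer) of positions n with η(n + a) = 1 for all a ∈ A, computed via the Haar measure ℙ on Ω = ∏ ℤ/b_kℤ, is ℙ({ω : φ(ω)(a) = 1 for all a ∈ A}) = ∏_{k≥1}(1 − |A mod b_k|/b_k). -/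
open MeasureTheory
open Filter Topology

noncomputable instance (n : ℕ) : MeasurableSpace (ZMod n) := ⊤

lemma my_prod_subset_le {f : ℕ → ℝ} (h0 : ∀ k, 0 ≤ f k) (h1 : ∀ k, f k ≤ 1)
    {s t : Finset ℕ} (hst : s ⊆ t) : ∏ k ∈ t, f k ≤ ∏ k ∈ s, f k := by
  rw [← Finset.prod_sdiff hst]
  calc (∏ k ∈ t \ s, f k) * ∏ k ∈ s, f k ≤ 1 * ∏ k ∈ s, f k := by
        apply mul_le_mul_of_nonneg_right
        · exact Finset.prod_le_one (fun i _ => h0 i) (fun i _ => h1 i)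
        · exact Finset.prod_nonneg fun i _ => h0 i
    _ = ∏ k ∈ s, f k := one_mul _

lemma my_hasProd {f : ℕ → ℝ} (h0 : ∀ k, 0 ≤ f k) (h1 : ∀ k, f k ≤ 1) :
    HasProd f (⨅ s : Finset ℕ, ∏ k ∈ s, f k) := by
  apply tendsto_atTop_ciInf
  · exact fun s t hst => my_prod_subset_le h0 h1 hst
  · exact ⟨0, by rintro x ⟨s, rfl⟩; exact Finset.prod_nonneg fun i _ => h0 i⟩

open scoped Classical in
lemma my_cyl (b : ℕ → ℕ) (μ : Measure (∀ k, ZMod (b k))) [IsProbabilityMeasure μ]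
    (hcyl : ∀ (K : Finset ℕ) (v : ∀ k, ZMod (b k)),
      (μ {ω | ∀ k ∈ K, ω k = v k}).toReal = ∏ k ∈ K, (1 / (b k : ℝ)))
    (K : Finset ℕ) (T : ∀ k, Finset (ZMod (b k))) :
    (μ {ω | ∀ k ∈ K, ω k ∈ T k}).toReal = ∏ k ∈ K, (((T k).card : ℝ) / (b k : ℝ)) := by
  classical
  set G : (∀ k ∈ K, ZMod (b k)) → ∀ k, ZMod (b k) :=
    fun v k => if h : k ∈ K then v k h else 0 with hG
  have hset : {ω : ∀ k, ZMod (b k) | ∀ k ∈ K, ω k ∈ T k}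
      = ⋃ v ∈ K.pi T, {ω | ∀ k ∈ K, ω k = G v k} := by
    ext ω
    simp only [Set.mem_setOf_eq, Set.mem_iUnion]
    constructor
    · intro h
      refine ⟨fun k _ => ω k, Finset.mem_pi.mpr fun k hk => h k hk, ?_⟩
      intro k hk; simp [hG, hk]
    · rintro ⟨v, hv, h⟩ k hk
      rw [h k hk]
      simpa [hG, dif_pos hk] using Finset.mem_pi.mp hv k hk
  have hmeas : ∀ v : ∀ k ∈ K, ZMod (b k),
      MeasurableSet {ω : ∀ k, ZMod (b k) | ∀ k ∈ K, ω k = G v k} := by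
    intro v
    have : {ω : ∀ k, ZMod (b k) | ∀ k ∈ K, ω k = G v k}
        = ⋂ k ∈ K, (fun ω : ∀ k, ZMod (b k) => ω k) ⁻¹' {G v k} := by
      ext ω; simp
    rw [this]
    exact MeasurableSet.biInter K.countable_toSet fun k _ =>
      (measurable_pi_apply k) MeasurableSpace.measurableSet_top
  have hdisj : (↑(K.pi T) : Set (∀ k ∈ K, ZMod (b k))).PairwiseDisjoint
      (fun v => {ω : ∀ k, ZMod (b k) | ∀ k ∈ K, ω k = G v k}) := by
    intro v _ w _ hvw
    refine Set.disjoint_left.mpr fun ω h1 h2 => hvw ?_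
    funext k hk
    have e1 := h1 k hk
    have e2 := h2 k hk
    rw [e1] at e2
    simpa [hG, dif_pos hk] using e2
  rw [hset, measure_biUnion_finset hdisj (fun v _ => hmeas v),
    ENNReal.toReal_sum (fun v _ => measure_ne_top μ _)]
  have : ∀ v ∈ K.pi T,
      (μ {ω : ∀ k, ZMod (b k) | ∀ k ∈ K, ω k = G v k}).toReal = ∏ k ∈ K, (1 / (b k : ℝ)) :=
    fun v _ => hcyl K (G v)
  rw [Finset.sum_congr rfl this]
  rw [Finset.sum_const, Finset.card_pi, nsmul_eq_mul, Nat.cast_prod,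
    ← Finset.prod_mul_distrib]
  exact Finset.prod_congr rfl fun k _ => by rw [mul_one_div]



open scoped Classical in
theorem stmt19 (b : ℕ → ℕ) (hb : ∀ k, 2 ≤ b k)
    (hcop : ∀ i j, i ≠ j → Nat.Coprime (b i) (b j))
    (hsum : Summable fun k => (1 : ℝ) / b k)
    (μ : Measure (∀ k, ZMod (b k))) (hprob : IsProbabilityMeasure μ)
    -- `μ` is the Haar (product of uniform) measure on `Ω = ∏_k ℤ/b_kℤ`:
    (hcyl : ∀ (K : Finset ℕ) (v : ∀ k, ZMod (b k)),
      (μ {ω | ∀ k ∈ K, ω k = v k}).toReal = ∏ k ∈ K, (1 / (b k : ℝ)))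
    (A : Finset ℤ) (hA : A.Nonempty) :
    (μ {ω : ∀ k, ZMod (b k) | ∀ k, ∀ a ∈ A, ω k + ((a : ℤ) : ZMod (b k)) ≠ 0}).toReal
      = ∏' k, (1 - ((A.image (fun a : ℤ => (a : ZMod (b k)))).card : ℝ) / (b k : ℝ)) := by
  classical
  haveI hNZ : ∀ k, NeZero (b k) := fun k => ⟨by have := hb k; omega⟩
  have hbpos : ∀ k, (0 : ℝ) < b k := fun k => by
    have := hb k; positivity
  set m : ℕ → ℕ := fun k => (A.image (fun a : ℤ => ((a : ℤ) : ZMod (b k)))).card with hm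
  set T : ∀ k, Finset (ZMod (b k)) :=
    fun k => (A.image (fun a : ℤ => -((a : ℤ) : ZMod (b k))))ᶜ with hT
  have hmle : ∀ k, m k ≤ b k := by
    intro k
    calc m k ≤ Fintype.card (ZMod (b k)) := Finset.card_le_univ _
      _ = b k := ZMod.card (b k)
  have hcard : ∀ k, (T k).card = b k - m k := by
    intro k
    rw [hT]
    rw [Finset.card_compl, ZMod.card]
    congr 1
    have : (A.image fun a : ℤ => -((a : ℤ) : ZMod (b k)))
        = (A.image fun a : ℤ => ((a : ℤ) : ZMod (b k))).image (fun x => -x) := by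
      rw [Finset.image_image]; rfl
    rw [this, Finset.card_image_of_injective _ neg_injective]
  set f : ℕ → ℝ := fun k => 1 - (m k : ℝ) / b k with hf
  have hf0 : ∀ k, 0 ≤ f k := fun k => by
    have : (m k : ℝ) / b k ≤ 1 := by
      rw [div_le_one (hbpos k)]
      exact_mod_cast hmle k
    simp [hf]; linarith
  have hf1 : ∀ k, f k ≤ 1 := fun k => by
    have : (0:ℝ) ≤ (m k : ℝ) / b k := by positivity
    simp [hf]; linarith
  set E : ℕ → Set (∀ k, ZMod (b k)) := fun N => {ω | ∀ k ∈ Finset.range N, ω k ∈ T k} with hE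
  have hEmeas : ∀ N, MeasurableSet (E N) := by
    intro N
    have : E N = ⋂ k ∈ Finset.range N, (fun ω : ∀ k, ZMod (b k) => ω k) ⁻¹' (T k) := by
      ext ω; simp [hE]
    rw [this]
    exact MeasurableSet.biInter (Finset.range N).countable_toSet fun k _ =>
      (measurable_pi_apply k) MeasurableSpace.measurableSet_top
  have hanti : Antitone E := by
    intro N M h ω hω k hk
    exact hω k (Finset.mem_of_subset (Finset.range_subset_range.mpr h) hk)
  have hmemT : ∀ (k) (x : ZMod (b k)), x ∈ T k ↔ ∀ a ∈ A, x + ((a : ℤ) : ZMod (b k)) ≠ 0 := by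
    intro k x
    simp only [hT, Finset.mem_compl, Finset.mem_image, not_exists]
    constructor
    · intro h a ha hx
      exact h a ⟨ha, by rw [neg_eq_iff_add_eq_zero, add_comm]; exact hx⟩
    · rintro h a ⟨ha, rfl⟩
      exact h a ha (neg_add_cancel _)
  have hiInter : {ω : ∀ k, ZMod (b k) | ∀ k, ∀ a ∈ A, ω k + ((a : ℤ) : ZMod (b k)) ≠ 0}
      = ⋂ N, E N := by
    ext ω
    simp only [Set.mem_setOf_eq, Set.mem_iInter, hE, Finset.mem_range]
    constructor
    · intro h N k hk
      exact (hmemT k (ω k)).mpr (h k)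
    · intro h k
      exact (hmemT k (ω k)).mp (h (k+1) k (Nat.lt_succ_self k))
  have htend : Tendsto (fun N => (μ (E N)).toReal) atTop
      (𝓝 ((μ (⋂ N, E N)).toReal)) := by
    exact (ENNReal.tendsto_toReal (measure_ne_top μ _)).comp
      (tendsto_measure_iInter_atTop (fun N => (hEmeas N).nullMeasurableSet) hanti
        ⟨0, measure_ne_top μ _⟩)
  have hEN : ∀ N, (μ (E N)).toReal = ∏ k ∈ Finset.range N, f k := by
    intro N
    rw [hE]
    rw [my_cyl b μ hcyl (Finset.range N) T]
    refine Finset.prod_congr rfl fun k _ => ?_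
    rw [hcard k, hf, Nat.cast_sub (hmle k), sub_div, div_self (hbpos k).ne']
  have hp := my_hasProd hf0 hf1
  rw [hp.tprod_eq]
  rw [hiInter]
  refine tendsto_nhds_unique ?_ hp.tendsto_prod_nat
  simpa only [hEN] using htend
end
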